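/- In every proper 5-edge-colouring of the complete graph K₅, every colour class has size exactly two, each colour is missing at exactly one vertex, and the union of any two colour classes forms a Hamiltonian path of K₅. In particular, no nontrivial Kempe change can be performed on any proper 5-edge-colouring of K₅. -/

import Mathlib

open SimpleGraph

/-- A proper `k`-edge-colouring of `G`: distinct edges sharing a vertex receive
different colours. -/
def IsProperEdgeColoring {V : Type*} (G : SimpleGraph V) (k : ℕ)
    (φ : G.edgeSet → Fin k) : Prop :=
  ∀ e₁ e₂ : G.edgeSet, e₁ ≠ e₂ →
    (∃ v : V, v ∈ (e₁ : Sym2 V) ∧ v ∈ (e₂ : Sym2 V)) → φ e₁ ≠ φ e₂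

/-- The spanning subgraph of `G` consisting of the edges coloured `a` or `b` under `φ`. -/
def kempeGraph {V : Type*} (G : SimpleGraph V) {k : ℕ} (φ : G.edgeSet → Fin k)
    (a b : Fin k) : SimpleGraph V where
  Adj u v := ∃ h : G.Adj u v, φ ⟨s(u, v), h⟩ = a ∨ φ ⟨s(u, v), h⟩ = b
  symm := by
    constructor
    rintro u v ⟨h, hc⟩
    refine ⟨h.symm, ?_⟩
    have he : (⟨s(v, u), h.symm⟩ : G.edgeSet) = ⟨s(u, v), h⟩ :=
      Subtype.ext (Sym2.eq_swap)
    rw [he]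
    exact hc
  loopless := by
    constructor
    rintro v ⟨h, _⟩
    exact G.loopless.irrefl v h

/-- The edge `e` lies in the Kempe chain determined by the colours `a, b` and the
connected component of the vertex `w` in the `(a,b)`-subgraph. -/
def InKempeChain {V : Type*} (G : SimpleGraph V) {k : ℕ} (φ : G.edgeSet → Fin k)
    (a b : Fin k) (w : V) (e : G.edgeSet) : Prop :=
  (φ e = a ∨ φ e = b) ∧ ∃ u ∈ (e : Sym2 V), (kempeGraph G φ a b).Reachable w u

/-- `ψ` is obtained from `φ` by a single Kempe change: the colours `a` and `b` are
swapped on one connected component of the subgraph induced by the edges coloured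
`a` or `b`, and all other edges keep their colour. -/
def KempeChange {V : Type*} (G : SimpleGraph V) (k : ℕ)
    (φ ψ : G.edgeSet → Fin k) : Prop :=
  ∃ (a b : Fin k) (w : V), ∀ e : G.edgeSet,
    (InKempeChain G φ a b w e → ψ e = Equiv.swap a b (φ e)) ∧
    (¬ InKempeChain G φ a b w e → ψ e = φ e)

/-- Kempe equivalence: `ψ` is obtained from `φ` by a finite sequence of Kempe changes. -/
def KempeEquiv {V : Type*} (G : SimpleGraph V) (k : ℕ)
    (φ ψ : G.edgeSet → Fin k) : Prop :=
  Relation.ReflTransGen (KempeChange G k) φ ψ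

/-- Two edge-colourings differ only by a permutation of the colour set. -/
def PermRelated {V : Type*} (G : SimpleGraph V) (k : ℕ)
    (φ ψ : G.edgeSet → Fin k) : Prop :=
  ∃ σ : Equiv.Perm (Fin k), ∀ e : G.edgeSet, ψ e = σ (φ e)

/-- Kempe equivalence with colourings differing by a permutation of colours identified. -/
def KempePermEquiv {V : Type*} (G : SimpleGraph V) (k : ℕ)
    (φ ψ : G.edgeSet → Fin k) : Prop :=
  ∃ ψ' : G.edgeSet → Fin k, PermRelated G k ψ ψ' ∧ KempeEquiv G k φ ψ'

abbrev G5 : SimpleGraph (Fin 5) := completeGraph (Fin 5)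

instance : DecidableRel G5.Adj := fun u v => decidable_of_iff (u ≠ v) (by simp [completeGraph])

def Misses (φ : G5.edgeSet → Fin 5) (v : Fin 5) (c : Fin 5) : Prop :=
  ∀ e : G5.edgeSet, v ∈ (e : Sym2 (Fin 5)) → φ e ≠ c

lemma edge_repr (e : G5.edgeSet) (v : Fin 5) (hv : v ∈ (e : Sym2 (Fin 5))) :
    ∃ u, u ≠ v ∧ (e : Sym2 (Fin 5)) = s(v,u) := by
  obtain ⟨e, he⟩ := e
  induction e using Sym2.ind with
  | _ x y =>
    simp only [Sym2.mem_iff] at hv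
    have hxy : x ≠ y := G5.ne_of_adj he
    rcases hv with rfl | rfl
    · exact ⟨y, fun h => hxy h.symm, rfl⟩
    · exact ⟨x, hxy, Sym2.eq_swap⟩

lemma edge_repr' (e : G5.edgeSet) : ∃ u v, u ≠ v ∧ (e : Sym2 (Fin 5)) = s(u,v) := by
  obtain ⟨e, he⟩ := e
  induction e using Sym2.ind with
  | _ x y => exact ⟨x, y, G5.ne_of_adj he, rfl⟩

set_option synthInstance.maxSize 2000 in
lemma six_distinct : ∀ a b c d e f : Fin 5,
    ¬(a≠b∧a≠c∧a≠d∧a≠e∧a≠f∧b≠c∧b≠d∧b≠e∧b≠f∧c≠d∧c≠e∧c≠f∧d≠e∧d≠f∧e≠f) := by decide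

variable {φ : G5.edgeSet → Fin 5} (hφ : IsProperEdgeColoring G5 5 φ)

include hφ in
lemma same_colour_disjoint {e₁ e₂ : G5.edgeSet} (hne : e₁ ≠ e₂) (h : φ e₁ = φ e₂)
    {v : Fin 5} (h₁ : v ∈ (e₁ : Sym2 (Fin 5))) (h₂ : v ∈ (e₂ : Sym2 (Fin 5))) : False :=
  hφ e₁ e₂ hne ⟨v, h₁, h₂⟩ h

include hφ in
lemma fiber_card_le (c : Fin 5) :
    (Finset.univ.filter (fun e : G5.edgeSet => φ e = c)).card ≤ 2 := by
  by_contra h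
  push_neg at h
  obtain ⟨e₁, e₂, e₃, h1, h2, h3, n12, n13, n23⟩ := Finset.two_lt_card_iff.mp h
  simp only [Finset.mem_filter] at h1 h2 h3
  obtain ⟨u₁, v₁, huv₁, he₁⟩ := edge_repr' e₁
  obtain ⟨u₂, v₂, huv₂, he₂⟩ := edge_repr' e₂
  obtain ⟨u₃, v₃, huv₃, he₃⟩ := edge_repr' e₃
  have mem : ∀ (u w : Fin 5) (e : G5.edgeSet), (e : Sym2 (Fin 5)) = s(u,w) → u ∈ (e : Sym2 (Fin 5)) ∧ w ∈ (e : Sym2 (Fin 5)) := by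
    intro u w e he; rw [he]; simp
  have d12 : ∀ x ∈ (e₁ : Sym2 (Fin 5)), ∀ y ∈ (e₂ : Sym2 (Fin 5)), x ≠ y := by
    rintro x hx y hy rfl; exact same_colour_disjoint hφ n12 (h1.2.trans h2.2.symm) hx hy
  have d13 : ∀ x ∈ (e₁ : Sym2 (Fin 5)), ∀ y ∈ (e₃ : Sym2 (Fin 5)), x ≠ y := by
    rintro x hx y hy rfl; exact same_colour_disjoint hφ n13 (h1.2.trans h3.2.symm) hx hy
  have d23 : ∀ x ∈ (e₂ : Sym2 (Fin 5)), ∀ y ∈ (e₃ : Sym2 (Fin 5)), x ≠ y := by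
    rintro x hx y hy rfl; exact same_colour_disjoint hφ n23 (h2.2.trans h3.2.symm) hx hy
  obtain ⟨m1u, m1v⟩ := mem _ _ _ he₁
  obtain ⟨m2u, m2v⟩ := mem _ _ _ he₂
  obtain ⟨m3u, m3v⟩ := mem _ _ _ he₃
  exact six_distinct u₁ v₁ u₂ v₂ u₃ v₃
    ⟨huv₁, d12 _ m1u _ m2u, d12 _ m1u _ m2v, d13 _ m1u _ m3u, d13 _ m1u _ m3v,
     d12 _ m1v _ m2u, d12 _ m1v _ m2v, d13 _ m1v _ m3u, d13 _ m1v _ m3v,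
     huv₂, d23 _ m2u _ m3u, d23 _ m2u _ m3v, d23 _ m2v _ m3u, d23 _ m2v _ m3v, huv₃⟩

include hφ in
lemma fiber_card_eq (c : Fin 5) :
    (Finset.univ.filter (fun e : G5.edgeSet => φ e = c)).card = 2 := by
  have hcard : Fintype.card G5.edgeSet = 10 := by decide
  have hsum : ∑ c : Fin 5, (Finset.univ.filter (fun e : G5.edgeSet => φ e = c)).card = 10 := by
    rw [← Finset.card_eq_sum_card_fiberwise (f := φ) (t := Finset.univ) (fun x _ => Finset.mem_univ _)]
    simpa using hcard
  by_contra hne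
  have hlt : (Finset.univ.filter (fun e : G5.edgeSet => φ e = c)).card < 2 :=
    lt_of_le_of_ne (fiber_card_le hφ c) hne
  have : ∑ c : Fin 5, (Finset.univ.filter (fun e : G5.edgeSet => φ e = c)).card
      < ∑ _c : Fin 5, 2 :=
    Finset.sum_lt_sum (fun i _ => fiber_card_le hφ i) ⟨c, Finset.mem_univ c, hlt⟩
  rw [hsum, Finset.sum_const, Finset.card_univ] at this
  simp at this

set_option synthInstance.maxSize 2000 in
lemma fifth_vertex : ∀ u₁ v₁ u₂ v₂ : Fin 5,
    (u₁≠v₁ ∧ u₁≠u₂ ∧ u₁≠v₂ ∧ v₁≠u₂ ∧ v₁≠v₂ ∧ u₂≠v₂) →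
    ∃ z : Fin 5, (z≠u₁ ∧ z≠v₁ ∧ z≠u₂ ∧ z≠v₂) ∧
      ∀ w : Fin 5, (w≠u₁ ∧ w≠v₁ ∧ w≠u₂ ∧ w≠v₂) → w = z := by decide

include hφ in
lemma colour_data (c : Fin 5) : ∃ (E₁ E₂ : G5.edgeSet) (z : Fin 5),
    E₁ ≠ E₂ ∧ φ E₁ = c ∧ φ E₂ = c ∧ (∀ e, φ e = c → e = E₁ ∨ e = E₂) ∧
    Misses φ z c ∧ (∀ w, Misses φ w c → w = z) := by
  obtain ⟨E₁, E₂, hne, hset⟩ := Finset.card_eq_two.mp (fiber_card_eq hφ c)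
  have hmem : ∀ e : G5.edgeSet, φ e = c ↔ (e = E₁ ∨ e = E₂) := by
    intro e
    constructor
    · intro h
      have : e ∈ ({E₁, E₂} : Finset G5.edgeSet) := by
        rw [← hset]; simp [h]
      simpa using this
    · intro h
      have : e ∈ ({E₁, E₂} : Finset G5.edgeSet) := by
        rcases h with rfl | rfl <;> simp
      rw [← hset] at this
      exact (Finset.mem_filter.mp this).2
  have hc₁ : φ E₁ = c := (hmem E₁).mpr (Or.inl rfl)
  have hc₂ : φ E₂ = c := (hmem E₂).mpr (Or.inr rfl)
  obtain ⟨u₁, v₁, huv₁, he₁⟩ := edge_repr' E₁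
  obtain ⟨u₂, v₂, huv₂, he₂⟩ := edge_repr' E₂
  have hd : ∀ x ∈ (E₁ : Sym2 (Fin 5)), ∀ y ∈ (E₂ : Sym2 (Fin 5)), x ≠ y := by
    rintro x hx y hy rfl; exact same_colour_disjoint hφ hne (hc₁.trans hc₂.symm) hx hy
  have m1 : u₁ ∈ (E₁ : Sym2 (Fin 5)) ∧ v₁ ∈ (E₁ : Sym2 (Fin 5)) := by rw [he₁]; simp
  have m2 : u₂ ∈ (E₂ : Sym2 (Fin 5)) ∧ v₂ ∈ (E₂ : Sym2 (Fin 5)) := by rw [he₂]; simp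
  obtain ⟨z, hz, hzu⟩ := fifth_vertex u₁ v₁ u₂ v₂
    ⟨huv₁, hd _ m1.1 _ m2.1, hd _ m1.1 _ m2.2, hd _ m1.2 _ m2.1, hd _ m1.2 _ m2.2, huv₂⟩
  refine ⟨E₁, E₂, z, hne, hc₁, hc₂, fun e h => (hmem e).mp h, ?_, ?_⟩
  · intro e hz' hc'
    rcases (hmem e).mp hc' with rfl | rfl
    · rw [he₁] at hz'; simp only [Sym2.mem_iff] at hz'
      rcases hz' with rfl | rfl
      · exact hz.1 rfl
      · exact hz.2.1 rfl
    · rw [he₂] at hz'; simp only [Sym2.mem_iff] at hz'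
      rcases hz' with rfl | rfl
      · exact hz.2.2.1 rfl
      · exact hz.2.2.2 rfl
  · intro w hw
    refine hzu w ⟨?_, ?_, ?_, ?_⟩
    · rintro rfl; exact hw E₁ (he₁ ▸ by simp) hc₁
    · rintro rfl; exact hw E₁ (he₁ ▸ by simp) hc₁
    · rintro rfl; exact hw E₂ (he₂ ▸ by simp) hc₂
    · rintro rfl; exact hw E₂ (he₂ ▸ by simp) hc₂

include hφ in
lemma misses_at_most_one {v : Fin 5} {a b : Fin 5} (hab : a ≠ b)
    (ha : Misses φ v a) (hb : Misses φ v b) : False := by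
  classical
  set g : Fin 5 → Fin 5 := fun u =>
    if h : G5.Adj v u then φ ⟨s(v,u), h⟩ else 0 with hg
  have hmap : ∀ u ∈ Finset.univ.erase v, g u ∈ (Finset.univ \ {a, b} : Finset (Fin 5)) := by
    intro u hu
    have huv : u ≠ v := (Finset.mem_erase.mp hu).1
    have hadj : G5.Adj v u := by simp [completeGraph, huv.symm]
    have hmem : v ∈ ((⟨s(v,u), hadj⟩ : G5.edgeSet) : Sym2 (Fin 5)) := by simp
    simp only [hg, dif_pos hadj, Finset.mem_sdiff, Finset.mem_univ, true_and,
      Finset.mem_insert, Finset.mem_singleton]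
    push_neg
    exact ⟨ha _ hmem, hb _ hmem⟩
  have hinj : Set.InjOn g (Finset.univ.erase v : Finset (Fin 5)) := by
    intro u hu u' hu' heq
    simp only [Finset.coe_erase, Set.mem_diff, Finset.coe_univ, Set.mem_singleton_iff] at hu hu'
    by_contra hne
    have hadj : G5.Adj v u := by simp [completeGraph]; exact fun h => hu.2 h.symm
    have hadj' : G5.Adj v u' := by simp [completeGraph]; exact fun h => hu'.2 h.symm
    simp only [hg, dif_pos hadj, dif_pos hadj'] at heq
    have hEne : (⟨s(v,u), hadj⟩ : G5.edgeSet) ≠ ⟨s(v,u'), hadj'⟩ := by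
      simp only [ne_eq, Subtype.mk.injEq, Sym2.eq_iff]
      push_neg
      intro h
      have h' := congrArg Subtype.val h
      rw [Sym2.eq_iff] at h'
      rcases h' with ⟨_, h''⟩ | ⟨h'', _⟩
      · exact hne h''
      · exact hu'.2 h''.symm
    exact hφ _ _ hEne ⟨v, by simp, by simp⟩ heq
  have hcard := Finset.card_le_card_of_injOn g hmap hinj
  rw [Finset.card_erase_of_mem (Finset.mem_univ v)] at hcard
  have h2 : ({a, b} : Finset (Fin 5)).card = 2 := Finset.card_pair hab
  rw [Finset.card_sdiff_of_subset (Finset.subset_univ _), h2] at hcard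
  simp at hcard

set_option synthInstance.maxSize 2000 in
lemma compl2 : ∀ x p y : Fin 5, (x≠p∧x≠y∧p≠y) →
    ∃ z w : Fin 5, z ≠ w ∧ ∀ u : Fin 5, (u≠x∧u≠p∧u≠y) → (u = z ∨ u = w) := by decide

lemma not_misses {v : Fin 5} {c : Fin 5} (h : ¬ Misses φ v c) :
    ∃ (e : G5.edgeSet) (u : Fin 5), u ≠ v ∧ (e : Sym2 (Fin 5)) = s(v,u) ∧ φ e = c := by
  unfold Misses at h
  push_neg at h
  obtain ⟨e, hv, hc⟩ := h
  obtain ⟨u, hu, he⟩ := edge_repr e v hv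
  exact ⟨e, u, hu, he, hc⟩

include hφ in
set_option maxHeartbeats 1000000 in
lemma ham_path (a b : Fin 5) (hab : a ≠ b) :
    ∃ x p q r y : Fin 5,
      (x≠p ∧ x≠q ∧ x≠r ∧ x≠y ∧ p≠q ∧ p≠r ∧ p≠y ∧ q≠r ∧ q≠y ∧ r≠y) ∧
      ∃ (E1 E2 E3 E4 : G5.edgeSet),
        (E1:Sym2 (Fin 5)) = s(x,p) ∧ (E2:Sym2 (Fin 5)) = s(p,q) ∧
        (E3:Sym2 (Fin 5)) = s(q,r) ∧ (E4:Sym2 (Fin 5)) = s(r,y) ∧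
        φ E1 = b ∧ φ E2 = a ∧ φ E3 = b ∧ φ E4 = a ∧
        ∀ e : G5.edgeSet, (φ e = a ∨ φ e = b) → (e = E1 ∨ e = E2 ∨ e = E3 ∨ e = E4) := by
  obtain ⟨A₁, A₂, x, hAne, hA₁, hA₂, hAmem, hxA, hxAu⟩ := colour_data hφ a
  obtain ⟨B₁, B₂, y, hBne, hB₁, hB₂, hBmem, hyB, hyBu⟩ := colour_data hφ b
  have hxy : x ≠ y := fun h => misses_at_most_one hφ hab hxA (h ▸ hyB)
  -- x has a b-edge to p
  have hxb : ¬ Misses φ x b := fun h => hxy (hyBu x h)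
  obtain ⟨Eb1, p, hpx, hEb1, hEb1b⟩ := not_misses hxb
  have hpy : p ≠ y := by
    rintro rfl
    exact hyB Eb1 (hEb1 ▸ by simp) hEb1b
  -- y has an a-edge to r
  have hya : ¬ Misses φ y a := fun h => hxy (hxAu y h).symm
  obtain ⟨Ea1, r, hry, hEa1, hEa1a⟩ := not_misses hya
  have hrx : r ≠ x := by
    rintro rfl
    exact hxA Ea1 (hEa1 ▸ by simp) hEa1a
  -- p ≠ r
  have hpr : p ≠ r := by
    rintro rfl
    -- other a-edge
    have hmemEa1 := hAmem Ea1 hEa1a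
    have hmemEb1 := hBmem Eb1 hEb1b
    obtain ⟨A', hA'ne, hA'a⟩ : ∃ A', A' ≠ Ea1 ∧ φ A' = a := by
      rcases hmemEa1 with rfl | rfl
      · exact ⟨A₂, fun h => hAne h.symm, hA₂⟩
      · exact ⟨A₁, hAne, hA₁⟩
    obtain ⟨B', hB'ne, hB'b⟩ : ∃ B', B' ≠ Eb1 ∧ φ B' = b := by
      rcases hmemEb1 with rfl | rfl
      · exact ⟨B₂, fun h => hBne h.symm, hB₂⟩
      · exact ⟨B₁, hBne, hB₁⟩
    obtain ⟨u, v, huv, hA'⟩ := edge_repr' A'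
    obtain ⟨u', v', hu'v', hB'⟩ := edge_repr' B'
    have hout : ∀ w ∈ (A' : Sym2 (Fin 5)), w≠x ∧ w≠p ∧ w≠y := by
      intro w hw
      refine ⟨?_, ?_, ?_⟩
      · rintro rfl; exact hxA A' hw hA'a
      · rintro rfl
        exact same_colour_disjoint hφ hA'ne (hA'a.trans hEa1a.symm) hw (hEa1 ▸ by simp)
      · rintro rfl
        exact same_colour_disjoint hφ hA'ne (hA'a.trans hEa1a.symm) hw (hEa1 ▸ by simp)
    have hout' : ∀ w ∈ (B' : Sym2 (Fin 5)), w≠x ∧ w≠p ∧ w≠y := by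
      intro w hw
      refine ⟨?_, ?_, ?_⟩
      · rintro rfl
        exact same_colour_disjoint hφ hB'ne (hB'b.trans hEb1b.symm) hw (hEb1 ▸ by simp)
      · rintro rfl
        exact same_colour_disjoint hφ hB'ne (hB'b.trans hEb1b.symm) hw (hEb1 ▸ by simp)
      · rintro rfl; exact hyB B' hw hB'b
    obtain ⟨z, w, hzw, huniq⟩ := compl2 x p y ⟨hpx.symm, hxy, hpy⟩
    have hu := huniq u (hout u (hA' ▸ by simp))
    have hv := huniq v (hout v (hA' ▸ by simp))
    have hu' := huniq u' (hout' u' (hB' ▸ by simp))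
    have hv' := huniq v' (hout' v' (hB' ▸ by simp))
    have : A' = B' := by
      apply Subtype.ext
      rw [hA', hB']
      rcases hu with rfl | rfl <;> rcases hv with rfl | rfl <;>
        rcases hu' with rfl | rfl <;> rcases hv' with rfl | rfl <;>
        first
          | rfl
          | exact Sym2.eq_swap
          | exact absurd rfl huv
          | exact absurd rfl hu'v'
    rw [this, hB'b] at hA'a
    exact hab hA'a.symm
  -- p has an a-edge to q
  have hpa : ¬ Misses φ p a := fun h => hpx (hxAu p h)
  obtain ⟨Ea2, q, hqp, hEa2, hEa2a⟩ := not_misses hpa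
  have hEa12 : Ea2 ≠ Ea1 := by
    intro h
    have hp : p ∈ (Ea1 : Sym2 (Fin 5)) := h ▸ (hEa2 ▸ by simp)
    rw [hEa1] at hp
    simp only [Sym2.mem_iff] at hp
    rcases hp with h' | h'
    · exact hpy h'
    · exact hpr h'
  have hqy : q ≠ y := by
    intro h
    refine same_colour_disjoint hφ (v := q) hEa12 (hEa2a.trans hEa1a.symm) ?_ ?_
    · rw [hEa2]; simp
    · rw [hEa1, h]; simp
  have hqr : q ≠ r := by
    intro h
    refine same_colour_disjoint hφ (v := q) hEa12 (hEa2a.trans hEa1a.symm) ?_ ?_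
    · rw [hEa2]; simp
    · rw [hEa1, h]; simp
  have hqx : q ≠ x := by
    rintro rfl
    exact hxA Ea2 (hEa2 ▸ by simp) hEa2a
  -- r has a b-edge to q2
  have hrb : ¬ Misses φ r b := fun h => hry (hyBu r h)
  obtain ⟨Eb2, q2, hq2r, hEb2, hEb2b⟩ := not_misses hrb
  have hEb12 : Eb2 ≠ Eb1 := by
    intro h
    have hr : r ∈ (Eb1 : Sym2 (Fin 5)) := h ▸ (hEb2 ▸ by simp)
    rw [hEb1] at hr
    simp only [Sym2.mem_iff] at hr
    rcases hr with h' | h'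
    · exact hrx h'
    · exact hpr h'.symm
  have hq2x : q2 ≠ x := by
    intro h
    refine same_colour_disjoint hφ (v := q2) hEb12 (hEb2b.trans hEb1b.symm) ?_ ?_
    · rw [hEb2]; simp
    · rw [hEb1, h]; simp
  have hq2p : q2 ≠ p := by
    intro h
    refine same_colour_disjoint hφ (v := q2) hEb12 (hEb2b.trans hEb1b.symm) ?_ ?_
    · rw [hEb2]; simp
    · rw [hEb1, h]; simp
  have hq2y : q2 ≠ y := by
    rintro rfl
    exact hyB Eb2 (hEb2 ▸ by simp) hEb2b
  obtain ⟨z, hz, hzuniq⟩ := fifth_vertex x p y r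
    ⟨hpx.symm, hxy, hrx.symm, hpy, hpr, fun h => hry h.symm⟩
  have hqz : q = z := hzuniq q ⟨hqx, hqp, hqy, hqr⟩
  have hq2z : q2 = z := hzuniq q2 ⟨hq2x, hq2p, hq2y, hq2r⟩
  have hq2q : q2 = q := hq2z.trans hqz.symm
  subst hq2q
  -- class characterizations
  have hAeq : ∀ e, φ e = a → e = Ea2 ∨ e = Ea1 := by
    intro e he
    have h1 := hAmem Ea1 hEa1a
    have h2 := hAmem Ea2 hEa2a
    have h3 := hAmem e he
    rcases h1 with h1 | h1 <;> rcases h2 with h2 | h2 <;> rcases h3 with h3 | h3 <;>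
      first
        | (left; rw [h3, ← h2])
        | (right; rw [h3, ← h1])
        | exact absurd (h2.trans h1.symm) hEa12
  have hBeq : ∀ e, φ e = b → e = Eb1 ∨ e = Eb2 := by
    intro e he
    have h1 := hBmem Eb1 hEb1b
    have h2 := hBmem Eb2 hEb2b
    have h3 := hBmem e he
    rcases h1 with h1 | h1 <;> rcases h2 with h2 | h2 <;> rcases h3 with h3 | h3 <;>
      first
        | (left; rw [h3, ← h1])
        | (right; rw [h3, ← h2])
        | exact absurd (h2.trans h1.symm) hEb12
  refine ⟨x, p, q2, r, y,
    ⟨hpx.symm, fun h => hq2x h.symm, fun h => hrx h.symm, hxy,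
     fun h => hq2p h.symm, hpr, hpy, hq2r, hq2y, hry⟩,
    Eb1, Ea2, Eb2, Ea1, hEb1, hEa2, ?_, ?_, hEb1b, hEa2a, hEb2b, hEa1a, ?_⟩
  · rw [hEb2]; exact Sym2.eq_swap
  · rw [hEa1]; exact Sym2.eq_swap
  · intro e he
    rcases he with he | he
    · rcases hAeq e he with h | h
      · exact Or.inr (Or.inl h)
      · exact Or.inr (Or.inr (Or.inr h))
    · rcases hBeq e he with h | h
      · exact Or.inl h
      · exact Or.inr (Or.inr (Or.inl h))

set_option synthInstance.maxSize 2000 in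
lemma fin5_cover : ∀ x p q r y v : Fin 5,
    (x≠p ∧ x≠q ∧ x≠r ∧ x≠y ∧ p≠q ∧ p≠r ∧ p≠y ∧ q≠r ∧ q≠y ∧ r≠y) →
    (v = x ∨ v = p ∨ v = q ∨ v = r ∨ v = y) := by decide

lemma adj_iff {u v : Fin 5} : G5.Adj u v ↔ u ≠ v := by simp [completeGraph]

/-- **Structure of proper 5-edge-colourings of `K₅`.** In every proper 5-edge-colouring
of `K₅`: every colour class has size exactly two; each colour is missing at exactly one
vertex; the union of any two colour classes forms a Hamiltonian path of `K₅`; and no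
nontrivial Kempe change can be performed (every Kempe change yields a colouring that
differs only by a permutation of the colours). -/
theorem K5_five_edge_colouring_structure
    (φ : (completeGraph (Fin 5)).edgeSet → Fin 5)
    (hφ : IsProperEdgeColoring (completeGraph (Fin 5)) 5 φ) :
    (∀ c : Fin 5, {e : (completeGraph (Fin 5)).edgeSet | φ e = c}.ncard = 2) ∧
    (∀ c : Fin 5,
      {v : Fin 5 | ∀ e : (completeGraph (Fin 5)).edgeSet,
        v ∈ (e : Sym2 (Fin 5)) → φ e ≠ c}.ncard = 1) ∧
    (∀ a b : Fin 5, a ≠ b →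
      ∃ (u v : Fin 5) (w : (completeGraph (Fin 5)).Walk u v),
        w.IsPath ∧ w.IsHamiltonian ∧
        ∀ e : (completeGraph (Fin 5)).edgeSet,
          (e : Sym2 (Fin 5)) ∈ w.edges ↔ (φ e = a ∨ φ e = b)) ∧
    (∀ ψ : (completeGraph (Fin 5)).edgeSet → Fin 5,
      KempeChange (completeGraph (Fin 5)) 5 φ ψ →
        PermRelated (completeGraph (Fin 5)) 5 φ ψ) := by
  refine ⟨?_, ?_, ?_, ?_⟩
  · -- colour classes have size 2
    intro c
    obtain ⟨E₁, E₂, z, hne, h₁, h₂, hmem, -, -⟩ := colour_data hφ c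
    have : {e : G5.edgeSet | φ e = c} = {E₁, E₂} := by
      ext e
      simp only [Set.mem_setOf_eq, Set.mem_insert_iff, Set.mem_singleton_iff]
      exact ⟨hmem e, by rintro (rfl | rfl) <;> assumption⟩
    rw [this, Set.ncard_pair hne]
  · -- missing vertex
    intro c
    obtain ⟨E₁, E₂, z, hne, h₁, h₂, hmem, hz, hzu⟩ := colour_data hφ c
    have : {v : Fin 5 | ∀ e : G5.edgeSet, v ∈ (e : Sym2 (Fin 5)) → φ e ≠ c} = {z} := by
      ext w
      simp only [Set.mem_setOf_eq, Set.mem_singleton_iff]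
      exact ⟨fun h => hzu w h, fun h => h ▸ hz⟩
    rw [this, Set.ncard_singleton]
  · -- Hamiltonian paths
    intro a b hab
    obtain ⟨x, p, q, r, y, ⟨d1,d2,d3,d4,d5,d6,d7,d8,d9,d10⟩,
      E1, E2, E3, E4, hE1, hE2, hE3, hE4, hc1, hc2, hc3, hc4, hcov⟩ := ham_path hφ a b hab
    have h1 : G5.Adj x p := adj_iff.mpr d1
    have h2 : G5.Adj p q := adj_iff.mpr d5
    have h3 : G5.Adj q r := adj_iff.mpr d8
    have h4 : G5.Adj r y := adj_iff.mpr d10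
    refine ⟨x, y, Walk.cons h1 (Walk.cons h2 (Walk.cons h3 (Walk.cons h4 Walk.nil))),
      ?_, ?_, ?_⟩
    · rw [Walk.isPath_def]
      simp only [Walk.support_cons, Walk.support_nil, List.nodup_cons, List.mem_cons,
        List.mem_singleton, List.not_mem_nil, or_false, List.nodup_nil, and_true,
        List.nodup_singleton]
      push_neg
      exact ⟨⟨d1, d2, d3, d4⟩, ⟨d5, d6, d7⟩, ⟨d8, d9⟩, d10, trivial⟩
    · intro v
      have hsup : (Walk.cons h1 (Walk.cons h2 (Walk.cons h3 (Walk.cons h4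
          Walk.nil)))).support = [x, p, q, r, y] := by
        simp [Walk.support_cons]
      rw [hsup]
      have hmem : v ∈ [x, p, q, r, y] := by
        rcases fin5_cover x p q r y v ⟨d1,d2,d3,d4,d5,d6,d7,d8,d9,d10⟩ with
          rfl|rfl|rfl|rfl|rfl <;> simp
      have hnd : ([x, p, q, r, y] : List (Fin 5)).Nodup := by
        simp only [List.nodup_cons, List.mem_cons, List.mem_singleton,
          List.not_mem_nil, or_false, List.nodup_nil, and_true, List.nodup_singleton]
        push_neg
        exact ⟨⟨d1, d2, d3, d4⟩, ⟨d5, d6, d7⟩, ⟨d8, d9⟩, d10, trivial⟩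
      exact List.count_eq_one_of_mem hnd hmem
    · intro e
      have hedges : (Walk.cons h1 (Walk.cons h2 (Walk.cons h3 (Walk.cons h4
          Walk.nil)))).edges = [s(x,p), s(p,q), s(q,r), s(r,y)] := by
        simp [Walk.edges_cons]
      rw [hedges]
      constructor
      · intro he
        simp only [List.mem_cons, List.not_mem_nil, or_false, List.mem_singleton] at he
        rcases he with he | he | he | he
        · rw [show e = E1 from Subtype.ext (he.trans hE1.symm), hc1]; exact Or.inr rfl
        · rw [show e = E2 from Subtype.ext (he.trans hE2.symm), hc2]; exact Or.inl rfl
        · rw [show e = E3 from Subtype.ext (he.trans hE3.symm), hc3]; exact Or.inr rfl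
        · rw [show e = E4 from Subtype.ext (he.trans hE4.symm), hc4]; exact Or.inl rfl
      · intro he
        rcases hcov e he with rfl | rfl | rfl | rfl <;>
          simp [hE1, hE2, hE3, hE4]
  · -- Kempe changes are trivial
    rintro ψ ⟨a, b, w0, hcond⟩
    by_cases hab : a = b
    · subst hab
      refine ⟨1, fun e => ?_⟩
      simp only [Equiv.Perm.one_apply]
      by_cases h : InKempeChain (completeGraph (Fin 5)) φ a a w0 e
      · rw [(hcond e).1 h, Equiv.swap_self, Equiv.refl_apply]
      · exact (hcond e).2 h
    · obtain ⟨x, p, q, r, y, ⟨d1,d2,d3,d4,d5,d6,d7,d8,d9,d10⟩,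
        E1, E2, E3, E4, hE1, hE2, hE3, hE4, hc1, hc2, hc3, hc4, hcov⟩ := ham_path hφ a b hab
      set K := kempeGraph (completeGraph (Fin 5)) φ a b with hK
      have k1 : K.Adj x p := by
        refine ⟨adj_iff.mpr d1, ?_⟩
        rw [show (⟨s(x,p), adj_iff.mpr d1⟩ : G5.edgeSet) = E1 from Subtype.ext hE1.symm, hc1]
        exact Or.inr rfl
      have k2 : K.Adj p q := by
        refine ⟨adj_iff.mpr d5, ?_⟩
        rw [show (⟨s(p,q), adj_iff.mpr d5⟩ : G5.edgeSet) = E2 from Subtype.ext hE2.symm, hc2]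
        exact Or.inl rfl
      have k3 : K.Adj q r := by
        refine ⟨adj_iff.mpr d8, ?_⟩
        rw [show (⟨s(q,r), adj_iff.mpr d8⟩ : G5.edgeSet) = E3 from Subtype.ext hE3.symm, hc3]
        exact Or.inr rfl
      have k4 : K.Adj r y := by
        refine ⟨adj_iff.mpr d10, ?_⟩
        rw [show (⟨s(r,y), adj_iff.mpr d10⟩ : G5.edgeSet) = E4 from Subtype.ext hE4.symm, hc4]
        exact Or.inl rfl
      have hreach : ∀ u : Fin 5, K.Reachable x u := by
        intro u
        rcases fin5_cover x p q r y u ⟨d1,d2,d3,d4,d5,d6,d7,d8,d9,d10⟩ with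
          rfl|rfl|rfl|rfl|rfl
        · exact Reachable.refl _
        · exact k1.reachable
        · exact k1.reachable.trans k2.reachable
        · exact (k1.reachable.trans k2.reachable).trans k3.reachable
        · exact ((k1.reachable.trans k2.reachable).trans k3.reachable).trans k4.reachable
      have hreach' : ∀ u : Fin 5, K.Reachable w0 u :=
        fun u => (hreach w0).symm.trans (hreach u)
      have hin : ∀ e : (completeGraph (Fin 5)).edgeSet, (φ e = a ∨ φ e = b) →
          InKempeChain (completeGraph (Fin 5)) φ a b w0 e := by
        intro e he
        obtain ⟨u, v, huv, hrep⟩ := edge_repr' e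
        exact ⟨he, u, by rw [hrep]; simp, hreach' u⟩
      refine ⟨Equiv.swap a b, fun e => ?_⟩
      by_cases h : φ e = a ∨ φ e = b
      · exact (hcond e).1 (hin e h)
      · push_neg at h
        rw [(hcond e).2 (fun hk => (not_or.mpr ⟨h.1, h.2⟩) hk.1),
          Equiv.swap_apply_of_ne_of_ne h.1 h.2]
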